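/- arXiv:2312.11017 — 2 statements merged into one kernel-verified Lean document; each statement's English description precedes it below -/
import Mathlib

section
/- Let X_1, Y_1, X_2, Y_2, X_3, Y_3 be finitely supported random variables on an abelian group G such that X_1 − Y_1 = X_2 − Y_2 =: U almost surely, (X_1,Y_1) → U → (X_2,Y_2) forms a Markov chain, (X_1,Y_1,X_2,Y_2) is independent of (X_3,Y_3), X_1 is independent of Y_1, and X_2 is independent of Y_2. Then H(X_2) + H(Y_1) + H(X_3 + Y_3) ≤ H(X_1 − Y_1) + H(X_3 − Y_1) + H(X_2 − Y_3). -/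
open MeasureTheory ProbabilityTheory Real

/-- Shannon entropy (natural log) of a finitely-valued random variable. -/
noncomputable def ent {Ω S : Type*} [MeasurableSpace Ω] [Fintype S]
    (μ : Measure Ω) (X : Ω → S) : ℝ :=
  ∑ s : S, Real.negMulLog ((μ (X ⁻¹' {s})).toReal)

namespace EntAux

open Finset

variable {Ω : Type*} [MeasurableSpace Ω] {μ : Measure Ω}

/-- probability mass function of a random variable -/
noncomputable def pr (μ : Measure Ω) {S : Type*} (X : Ω → S) (s : S) : ℝ :=
  (μ (X ⁻¹' {s})).toReal

/-- all fibers of `X` are measurable -/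
def FM {S : Type*} (X : Ω → S) : Prop := ∀ s : S, MeasurableSet (X ⁻¹' {s})

variable {S T : Type*}

lemma pr_nonneg (X : Ω → S) (s : S) : 0 ≤ pr μ X s := ENNReal.toReal_nonneg

lemma ent_eq_sum [Fintype S] (X : Ω → S) : ent μ X = ∑ s : S, negMulLog (pr μ X s) := rfl

lemma FM.pair {X : Ω → S} {Y : Ω → T} (hX : FM X) (hY : FM Y) :
    FM (fun ω => (X ω, Y ω)) := by
  rintro ⟨s, t⟩
  have : (fun ω => (X ω, Y ω)) ⁻¹' {(s, t)} = X ⁻¹' {s} ∩ Y ⁻¹' {t} := by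
    ext ω; simp [Prod.ext_iff]
  rw [this]; exact (hX s).inter (hY t)

lemma FM.comp [Fintype S] {X : Ω → S} (hX : FM X) (f : S → T) :
    FM (fun ω => f (X ω)) := by
  classical
  intro t
  have : (fun ω => f (X ω)) ⁻¹' {t} = ⋃ s ∈ Finset.univ.filter (fun s => f s = t), X ⁻¹' {s} := by
    ext ω; simp
  rw [this]
  exact Finset.measurableSet_biUnion _ fun s _ => hX s

lemma pr_comp [Fintype S] [DecidableEq T] {X : Ω → S} (hX : FM X) (f : S → T) (t : T)
    [IsProbabilityMeasure μ] :
    pr μ (fun ω => f (X ω)) t = ∑ s ∈ Finset.univ.filter (fun s => f s = t), pr μ X s := by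
  classical
  have h1 : ∑ s ∈ Finset.univ.filter (fun s => f s = t), μ (X ⁻¹' {s})
      = μ (X ⁻¹' ↑(Finset.univ.filter (fun s => f s = t))) :=
    sum_measure_preimage_singleton _ (fun s _ => hX s)
  have h2 : X ⁻¹' ↑(Finset.univ.filter (fun s => f s = t)) = (fun ω => f (X ω)) ⁻¹' {t} := by
    ext ω; simp
  unfold pr
  rw [← h2, ← h1, ENNReal.toReal_sum (fun s _ => measure_ne_top μ _)]

lemma sum_pr [Fintype S] {X : Ω → S} (hX : FM X) [IsProbabilityMeasure μ] :
    ∑ s : S, pr μ X s = 1 := by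
  classical
  have h := pr_comp (μ := μ) hX (fun _ => ()) ()
  have h2 : pr μ (fun _ : Ω => ()) () = 1 := by
    unfold pr
    have : (fun _ : Ω => ()) ⁻¹' {()} = Set.univ := by ext ω; simp
    rw [this]; simp
  rw [h2] at h
  rw [h]
  apply Finset.sum_congr _ (fun _ _ => rfl)
  ext s; simp

lemma pr_mono [Fintype S] [DecidableEq T] {X : Ω → S} (hX : FM X) (f : S → T) (s : S)
    [IsProbabilityMeasure μ] :
    pr μ X s ≤ pr μ (fun ω => f (X ω)) (f s) := by
  classical
  rw [pr_comp hX f (f s)]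
  exact Finset.single_le_sum (fun i _ => pr_nonneg X i) (by simp)

lemma negMulLog_add_le {a b : ℝ} (ha : 0 ≤ a) (hb : 0 ≤ b) :
    negMulLog (a + b) ≤ negMulLog a + negMulLog b := by
  have key : ∀ x y : ℝ, 0 ≤ x → 0 ≤ y → x * log x ≤ x * log (x + y) := by
    intro x y hx hy
    rcases eq_or_lt_of_le hx with h | h
    · simp [← h]
    · exact mul_le_mul_of_nonneg_left (Real.log_le_log h (by linarith)) hx
  have h1 := key a b ha hb
  have h2 := key b a hb ha
  rw [add_comm b a] at h2
  simp only [negMulLog, neg_mul]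
  nlinarith [h1, h2]

lemma negMulLog_sum_le {ι : Type*} {s : Finset ι} {f : ι → ℝ} (hf : ∀ i ∈ s, 0 ≤ f i) :
    negMulLog (∑ i ∈ s, f i) ≤ ∑ i ∈ s, negMulLog (f i) := by
  classical
  induction s using Finset.cons_induction with
  | empty => simp
  | cons a s ha ih =>
    rw [Finset.sum_cons, Finset.sum_cons]
    have h1 : negMulLog (f a + ∑ i ∈ s, f i) ≤ negMulLog (f a) + negMulLog (∑ i ∈ s, f i) :=
      negMulLog_add_le (hf a (Finset.mem_cons_self a s))
        (Finset.sum_nonneg fun i hi => hf i (Finset.mem_cons_of_mem hi))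
    have h2 := ih (fun i hi => hf i (Finset.mem_cons_of_mem hi))
    linarith

lemma ent_comp_le [Fintype S] [Fintype T] {X : Ω → S} (hX : FM X) (f : S → T)
    [IsProbabilityMeasure μ] :
    ent μ (fun ω => f (X ω)) ≤ ent μ X := by
  classical
  rw [ent_eq_sum, ent_eq_sum]
  rw [← Finset.sum_fiberwise_of_maps_to (g := f) (fun s _ => Finset.mem_univ (f s))
    (fun s => negMulLog (pr μ X s))]
  apply Finset.sum_le_sum
  intro t _
  rw [pr_comp hX f t]
  exact negMulLog_sum_le (fun i _ => pr_nonneg X i)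

lemma ent_congr_ae {X Y : Ω → S} [Fintype S] (h : ∀ᵐ ω ∂μ, X ω = Y ω) :
    ent μ X = ent μ Y := by
  unfold ent
  apply Finset.sum_congr rfl
  intro s _
  have : μ (X ⁻¹' {s}) = μ (Y ⁻¹' {s}) := by
    apply measure_congr
    filter_upwards [h] with ω hω
    exact congrArg (· ∈ ({s} : Set S)) hω
  rw [this]

lemma ent_eq_of_inv [Fintype S] [Fintype T] {X : Ω → S} {Y : Ω → T}
    (hX : FM X) (hY : FM Y) (f : S → T) (g : T → S)
    (hf : ∀ᵐ ω ∂μ, f (X ω) = Y ω) (hg : ∀ᵐ ω ∂μ, g (Y ω) = X ω)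
    [IsProbabilityMeasure μ] :
    ent μ X = ent μ Y := by
  have h1 : ent μ X = ent μ (fun ω => g (Y ω)) := ent_congr_ae (by filter_upwards [hg] with ω h; exact h.symm)
  have h2 : ent μ Y = ent μ (fun ω => f (X ω)) := ent_congr_ae (by filter_upwards [hf] with ω h; exact h.symm)
  exact le_antisymm (h1 ▸ ent_comp_le hY g) (h2 ▸ ent_comp_le hX f)

lemma ent_comp_weighted [Fintype S] [Fintype T] [DecidableEq T] {X : Ω → S} (hX : FM X) (f : S → T)
    [IsProbabilityMeasure μ] :
    ent μ (fun ω => f (X ω))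
      = ∑ s : S, -(pr μ X s * log (pr μ (fun ω => f (X ω)) (f s))) := by
  classical
  rw [ent_eq_sum]
  rw [← Finset.sum_fiberwise_of_maps_to (g := f) (fun s _ => Finset.mem_univ (f s))
    (fun s => -(pr μ X s * log (pr μ (fun ω => f (X ω)) (f s))))]
  apply Finset.sum_congr rfl
  intro t _
  have : ∀ s ∈ Finset.univ.filter (fun s => f s = t),
      -(pr μ X s * log (pr μ (fun ω => f (X ω)) (f s)))
        = -(pr μ X s * log (pr μ (fun ω => f (X ω)) t)) := by
    intro s hs
    rw [(Finset.mem_filter.1 hs).2]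
  rw [Finset.sum_congr rfl this, Finset.sum_neg_distrib, ← Finset.sum_mul,
    ← pr_comp hX f t]
  simp [negMulLog, neg_mul]


section Core

variable {A B C : Type*} [Fintype A] [Fintype B] [Fintype C] [IsProbabilityMeasure μ]

theorem ent_submod {X : Ω → A} {Y : Ω → B} {Z : Ω → C}
    (hX : FM X) (hY : FM Y) (hZ : FM Z) :
    ent μ (fun ω => (X ω, Y ω, Z ω)) + ent μ Z
      ≤ ent μ (fun ω => (X ω, Z ω)) + ent μ (fun ω => (Y ω, Z ω)) := by
  classical
  have hW : FM (fun ω => (X ω, Y ω, Z ω)) := hX.pair (hY.pair hZ)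
  have hXZ : FM (fun ω => (X ω, Z ω)) := hX.pair hZ
  have hYZ : FM (fun ω => (Y ω, Z ω)) := hY.pair hZ
  have eXZ := ent_comp_weighted (μ := μ) hW (fun d => (d.1, d.2.2))
  have eYZ := ent_comp_weighted (μ := μ) hW (fun d => d.2)
  have eZ  := ent_comp_weighted (μ := μ) hW (fun d => d.2.2)
  have eW  := ent_comp_weighted (μ := μ) hW (fun d => d)
  dsimp only at eXZ eYZ eZ eW
  rw [eXZ, eYZ, eZ, eW]
  set p : A × B × C → ℝ := pr μ (fun ω => (X ω, Y ω, Z ω)) with hp_def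
  set pxz : A × C → ℝ := pr μ (fun ω => (X ω, Z ω)) with hpxz_def
  set pyz : B × C → ℝ := pr μ (fun ω => (Y ω, Z ω)) with hpyz_def
  set pz : C → ℝ := pr μ Z with hpz_def
  set q : A × B × C → ℝ := fun d => pxz (d.1, d.2.2) * pyz d.2 / pz d.2.2 with hq_def
  have hqnonneg : ∀ d, 0 ≤ q d := by
    intro d
    exact div_nonneg (mul_nonneg (pr_nonneg _ _) (pr_nonneg _ _)) (pr_nonneg _ _)
  have key : ∀ d : A × B × C, p d - q d ≤
      (-(p d * log (pxz (d.1, d.2.2))) + -(p d * log (pyz d.2)))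
        - (-(p d * log (p d)) + -(p d * log (pz d.2.2))) := by
    intro d
    have hp0 : 0 ≤ p d := pr_nonneg _ _
    rcases eq_or_lt_of_le hp0 with hp | hp
    · rw [← hp]
      have := hqnonneg d
      simp only [zero_mul, neg_zero, zero_sub, add_zero, sub_zero, zero_add, neg_add_rev]
      linarith
    · have h1 : p d ≤ pxz (d.1, d.2.2) := pr_mono hW (fun d => (d.1, d.2.2)) d
      have h2 : p d ≤ pyz d.2 := pr_mono hW (fun d => d.2) d
      have h3 : p d ≤ pz d.2.2 := pr_mono hW (fun d => d.2.2) d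
      have hxz : 0 < pxz (d.1, d.2.2) := lt_of_lt_of_le hp h1
      have hyz : 0 < pyz d.2 := lt_of_lt_of_le hp h2
      have hz : 0 < pz d.2.2 := lt_of_lt_of_le hp h3
      have hq : 0 < q d := div_pos (mul_pos hxz hyz) hz
      have hlog : log (q d / p d) ≤ q d / p d - 1 :=
        log_le_sub_one_of_pos (div_pos hq hp)
      have hlq : log (q d / p d)
          = log (pxz (d.1, d.2.2)) + log (pyz d.2) - log (pz d.2.2) - log (p d) := by
        rw [hq_def]
        dsimp only
        rw [Real.log_div (by positivity) (ne_of_gt hp),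
          Real.log_div (by positivity) (ne_of_gt hz),
          Real.log_mul (ne_of_gt hxz) (ne_of_gt hyz)]
      rw [hlq] at hlog
      have hmul := mul_le_mul_of_nonneg_left hlog hp.le
      have hdiv : p d * (q d / p d - 1) = q d - p d := by
        field_simp
      rw [hdiv] at hmul
      nlinarith [hmul]
  have hsum := Finset.sum_le_sum (fun d (_ : d ∈ (Finset.univ : Finset (A × B × C))) => key d)
  have hps : ∑ d : A × B × C, p d = 1 := sum_pr hW
  have hmarg1 : ∀ c : C, ∑ a : A, pxz (a, c) = pz c := by
    intro c
    have h := pr_comp (μ := μ) hXZ Prod.snd c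
    dsimp only at h
    rw [← hpxz_def, ← hpz_def] at h
    rw [h, Finset.sum_filter, Fintype.sum_prod_type]
    apply Finset.sum_congr rfl
    intro a _
    rw [Finset.sum_ite_eq' Finset.univ c (fun c' => pxz (a, c'))]
    simp
  have hmarg2 : ∀ c : C, ∑ b : B, pyz (b, c) = pz c := by
    intro c
    have h := pr_comp (μ := μ) hYZ Prod.snd c
    dsimp only at h
    rw [← hpyz_def, ← hpz_def] at h
    rw [h, Finset.sum_filter, Fintype.sum_prod_type]
    apply Finset.sum_congr rfl
    intro b _
    rw [Finset.sum_ite_eq' Finset.univ c (fun c' => pyz (b, c'))]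
    simp
  have hqs : ∑ d : A × B × C, q d ≤ 1 := by
    have hsplit : ∑ d : A × B × C, q d = ∑ c : C, pz c * pz c / pz c := by
      rw [Fintype.sum_prod_type]
      have step : ∀ a : A, ∑ bc : B × C, q (a, bc)
          = ∑ c : C, pxz (a, c) * pz c / pz c := by
        intro a
        rw [Fintype.sum_prod_type, Finset.sum_comm]
        apply Finset.sum_congr rfl
        intro c _
        calc ∑ b : B, q (a, (b, c))
            = ∑ b : B, pxz (a, c) * pyz (b, c) / pz c := rfl
          _ = (pxz (a, c) * ∑ b : B, pyz (b, c)) / pz c := by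
              rw [Finset.mul_sum, Finset.sum_div]
          _ = pxz (a, c) * pz c / pz c := by rw [hmarg2 c]
      rw [Finset.sum_congr rfl (fun a _ => step a), Finset.sum_comm]
      apply Finset.sum_congr rfl
      intro c _
      calc ∑ a : A, pxz (a, c) * pz c / pz c
          = (∑ a : A, pxz (a, c)) * pz c / pz c := by
            rw [← Finset.sum_div, ← Finset.sum_mul]
        _ = pz c * pz c / pz c := by rw [hmarg1]
    rw [hsplit]
    have : ∀ c : C, pz c * pz c / pz c ≤ pz c := by
      intro c
      have hpz0 : 0 ≤ pz c := pr_nonneg _ _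
      rcases eq_or_lt_of_le hpz0 with h | h
      · rw [← h]; simp
      · have : pz c ≠ 0 := ne_of_gt h
        rw [mul_div_assoc, div_self this, mul_one]
    calc ∑ c : C, pz c * pz c / pz c ≤ ∑ c : C, pz c :=
          Finset.sum_le_sum (fun c _ => this c)
      _ = 1 := sum_pr hZ
  rw [Finset.sum_sub_distrib] at hsum
  have expand : ∑ d : A × B × C,
      ((-(p d * log (pxz (d.1, d.2.2))) + -(p d * log (pyz d.2)))
        - (-(p d * log (p d)) + -(p d * log (pz d.2.2))))
      = (∑ d : A × B × C, -(p d * log (pxz (d.1, d.2.2)))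
          + ∑ d : A × B × C, -(p d * log (pyz d.2)))
        - (∑ d : A × B × C, -(p d * log (p d))
          + ∑ d : A × B × C, -(p d * log (pz d.2.2))) := by
    rw [Finset.sum_sub_distrib, Finset.sum_add_distrib, Finset.sum_add_distrib]
  rw [expand] at hsum
  linarith [hsum, hps, hqs]

end Core


section Core2

variable {A B C : Type*} [Fintype A] [Fintype B] [Fintype C] [IsProbabilityMeasure μ]

theorem ent_indep {X : Ω → A} {Y : Ω → B} (hX : FM X) (hY : FM Y)
    (hfac : ∀ a b, pr μ (fun ω => (X ω, Y ω)) (a, b) = pr μ X a * pr μ Y b) :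
    ent μ (fun ω => (X ω, Y ω)) = ent μ X + ent μ Y := by
  rw [ent_eq_sum, ent_eq_sum, ent_eq_sum, Fintype.sum_prod_type]
  calc ∑ a : A, ∑ b : B, negMulLog (pr μ (fun ω => (X ω, Y ω)) (a, b))
      = ∑ a : A, ∑ b : B,
          (pr μ Y b * negMulLog (pr μ X a) + pr μ X a * negMulLog (pr μ Y b)) :=
        Finset.sum_congr rfl (fun a _ => Finset.sum_congr rfl (fun b _ => by
          rw [hfac a b, negMulLog_mul]))
    _ = ∑ a : A, ((∑ b : B, pr μ Y b) * negMulLog (pr μ X a)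
          + pr μ X a * ∑ b : B, negMulLog (pr μ Y b)) := by
        apply Finset.sum_congr rfl; intro a _
        rw [Finset.sum_add_distrib, ← Finset.sum_mul, ← Finset.mul_sum]
    _ = ∑ a : A, (negMulLog (pr μ X a) + pr μ X a * ∑ b : B, negMulLog (pr μ Y b)) := by
        rw [sum_pr hY]; simp
    _ = ∑ a : A, negMulLog (pr μ X a) + (∑ a : A, pr μ X a) * ∑ b : B, negMulLog (pr μ Y b) := by
        rw [Finset.sum_add_distrib, ← Finset.sum_mul]
    _ = ∑ a : A, negMulLog (pr μ X a) + ∑ b : B, negMulLog (pr μ Y b) := by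
        rw [sum_pr hX, one_mul]

theorem ent_markov {P : Ω → A} {U : Ω → B} {Q : Ω → C}
    (hP : FM P) (hU : FM U) (hQ : FM Q)
    (hfac : ∀ a b c, pr μ (fun ω => (P ω, U ω, Q ω)) (a, b, c) * pr μ U b
      = pr μ (fun ω => (P ω, U ω)) (a, b) * pr μ (fun ω => (U ω, Q ω)) (b, c)) :
    ent μ (fun ω => (P ω, U ω, Q ω)) + ent μ U
      = ent μ (fun ω => (P ω, U ω)) + ent μ (fun ω => (U ω, Q ω)) := by
  classical
  have hW : FM (fun ω => (P ω, U ω, Q ω)) := hP.pair (hU.pair hQ)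
  have eAB := ent_comp_weighted (μ := μ) hW (fun d => (d.1, d.2.1))
  have eBC := ent_comp_weighted (μ := μ) hW (fun d => d.2)
  have eB  := ent_comp_weighted (μ := μ) hW (fun d => d.2.1)
  have eW  := ent_comp_weighted (μ := μ) hW (fun d => d)
  dsimp only at eAB eBC eB eW
  rw [eAB, eBC, eB, eW, ← Finset.sum_add_distrib, ← Finset.sum_add_distrib]
  apply Finset.sum_congr rfl
  intro d _
  have hp0 : 0 ≤ pr μ (fun ω => (P ω, U ω, Q ω)) d := pr_nonneg _ _
  rcases eq_or_lt_of_le hp0 with hp | hp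
  · rw [← hp]; ring
  · have hAB : 0 < pr μ (fun ω => (P ω, U ω)) (d.1, d.2.1) :=
      lt_of_lt_of_le hp (pr_mono hW (fun d => (d.1, d.2.1)) d)
    have hBC : 0 < pr μ (fun ω => (U ω, Q ω)) d.2 :=
      lt_of_lt_of_le hp (pr_mono hW (fun d => d.2) d)
    have hB : 0 < pr μ U d.2.1 :=
      lt_of_lt_of_le hp (pr_mono hW (fun d => d.2.1) d)
    have hfd := hfac d.1 d.2.1 d.2.2
    rw [show (d.1, d.2.1, d.2.2) = d from by simp] at hfd
    have hlog := congrArg log hfd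
    rw [Real.log_mul (ne_of_gt hp) (ne_of_gt hB),
      Real.log_mul (ne_of_gt hAB) (ne_of_gt hBC)] at hlog
    linear_combination (-(pr μ (fun ω => (P ω, U ω, Q ω)) d)) * hlog

end Core2


lemma FM.unit : FM (fun _ : Ω => ()) := fun s => by
  have h : ((fun _ : Ω => ()) ⁻¹' {s}) = Set.univ := by ext ω; simp
  rw [h]; exact MeasurableSet.univ

lemma ent_unit [IsProbabilityMeasure μ] : ent μ (fun _ : Ω => ()) = 0 := by
  rw [ent_eq_sum]
  have h : pr μ (fun _ : Ω => ()) () = 1 := by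
    unfold pr
    have h2 : ((fun _ : Ω => ()) ⁻¹' {()}) = Set.univ := by ext ω; simp
    rw [h2]; simp
  simp [h]

theorem ent_pair_le {A B : Type*} [Fintype A] [Fintype B] [IsProbabilityMeasure μ]
    {X : Ω → A} {Y : Ω → B} (hX : FM X) (hY : FM Y) :
    ent μ (fun ω => (X ω, Y ω)) ≤ ent μ X + ent μ Y := by
  have h := ent_submod (μ := μ) hX hY FM.unit
  have g1 : ent μ (fun ω => (X ω, Y ω, ())) = ent μ (fun ω => (X ω, Y ω)) :=
    ent_eq_of_inv (hX.pair (hY.pair FM.unit)) (hX.pair hY)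
      (fun t => (t.1, t.2.1)) (fun p => (p.1, p.2, ()))
      (Filter.Eventually.of_forall fun ω => rfl) (Filter.Eventually.of_forall fun ω => rfl)
  have g2 : ent μ (fun ω => (X ω, ())) = ent μ X :=
    ent_eq_of_inv (hX.pair FM.unit) hX Prod.fst (fun a => (a, ()))
      (Filter.Eventually.of_forall fun ω => rfl) (Filter.Eventually.of_forall fun ω => rfl)
  have g3 : ent μ (fun ω => (Y ω, ())) = ent μ Y :=
    ent_eq_of_inv (hY.pair FM.unit) hY Prod.fst (fun a => (a, ()))
      (Filter.Eventually.of_forall fun ω => rfl) (Filter.Eventually.of_forall fun ω => rfl)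
  have g0 : ent μ (fun _ : Ω => ()) = 0 := ent_unit
  linarith [h, g1, g2, g3, g0]

end EntAux

open EntAux

theorem stmt12 {Ω G : Type*} [MeasurableSpace Ω] [AddCommGroup G] [Fintype G]
    [MeasurableSpace G] [MeasurableSingletonClass G]
    (μ : Measure Ω) [IsProbabilityMeasure μ]
    (X₁ Y₁ X₂ Y₂ X₃ Y₃ : Ω → G)
    (hX₁ : Measurable X₁) (hY₁ : Measurable Y₁) (hX₂ : Measurable X₂)
    (hY₂ : Measurable Y₂) (hX₃ : Measurable X₃) (hY₃ : Measurable Y₃)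
    (heq : ∀ᵐ ω ∂μ, X₁ ω - Y₁ ω = X₂ ω - Y₂ ω)
    (hMC : ∀ (p q : G × G) (u : G),
      μ ((fun ω => (X₁ ω, Y₁ ω)) ⁻¹' {p} ∩ (fun ω => X₁ ω - Y₁ ω) ⁻¹' {u} ∩
          (fun ω => (X₂ ω, Y₂ ω)) ⁻¹' {q})
        * μ ((fun ω => X₁ ω - Y₁ ω) ⁻¹' {u})
      = μ ((fun ω => (X₁ ω, Y₁ ω)) ⁻¹' {p} ∩ (fun ω => X₁ ω - Y₁ ω) ⁻¹' {u})
        * μ ((fun ω => X₁ ω - Y₁ ω) ⁻¹' {u} ∩ (fun ω => (X₂ ω, Y₂ ω)) ⁻¹' {q}))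
    (hind : IndepFun (fun ω => (X₁ ω, Y₁ ω, X₂ ω, Y₂ ω)) (fun ω => (X₃ ω, Y₃ ω)) μ)
    (hind₁ : IndepFun X₁ Y₁ μ) (hind₂ : IndepFun X₂ Y₂ μ) :
    ent μ X₂ + ent μ Y₁ + ent μ (fun ω => X₃ ω + Y₃ ω)
      ≤ ent μ (fun ω => X₁ ω - Y₁ ω) + ent μ (fun ω => X₃ ω - Y₁ ω)
        + ent μ (fun ω => X₂ ω - Y₃ ω) := by
  classical
  set U : Ω → G := fun ω => X₁ ω - Y₁ ω with hU_def
  set V₁ : Ω → G := fun ω => X₃ ω - Y₁ ω with hV₁_def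
  set V₂ : Ω → G := fun ω => X₂ ω - Y₃ ω with hV₂_def
  set W : Ω → G := fun ω => X₃ ω + Y₃ ω with hW_def
  have fX₁ : FM X₁ := fun s => hX₁ (measurableSet_singleton s)
  have fY₁ : FM Y₁ := fun s => hY₁ (measurableSet_singleton s)
  have fX₂ : FM X₂ := fun s => hX₂ (measurableSet_singleton s)
  have fY₂ : FM Y₂ := fun s => hY₂ (measurableSet_singleton s)
  have fX₃ : FM X₃ := fun s => hX₃ (measurableSet_singleton s)
  have fY₃ : FM Y₃ := fun s => hY₃ (measurableSet_singleton s)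
  have fU : FM U := (fX₁.pair fY₁).comp (fun p => p.1 - p.2)
  have fV₁ : FM V₁ := (fX₃.pair fY₁).comp (fun p => p.1 - p.2)
  have fV₂ : FM V₂ := (fX₂.pair fY₃).comp (fun p => p.1 - p.2)
  have fW : FM W := (fX₃.pair fY₃).comp (fun p => p.1 + p.2)
  -- submodularity instances
  have S1 : ent μ (fun ω => (V₁ ω, V₂ ω)) ≤ ent μ V₁ + ent μ V₂ := ent_pair_le fV₁ fV₂
  have S3 : ent μ (fun ω => (Y₂ ω, V₂ ω)) ≤ ent μ Y₂ + ent μ V₂ := ent_pair_le fY₂ fV₂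
  have S9 : ent μ (fun ω => (X₁ ω, V₂ ω)) ≤ ent μ X₁ + ent μ V₂ := ent_pair_le fX₁ fV₂
  have S2 : ent μ (fun ω => (V₁ ω, Y₂ ω, V₂ ω)) + ent μ V₂
      ≤ ent μ (fun ω => (V₁ ω, V₂ ω)) + ent μ (fun ω => (Y₂ ω, V₂ ω)) :=
    ent_submod fV₁ fY₂ fV₂
  have S4 : ent μ (fun ω => (X₃ ω, V₁ ω, W ω)) + ent μ W
      ≤ ent μ (fun ω => (X₃ ω, W ω)) + ent μ (fun ω => (V₁ ω, W ω)) :=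
    ent_submod fX₃ fV₁ fW
  have S5 : ent μ (fun ω => (Y₁ ω, Y₂ ω, V₁ ω, W ω)) + ent μ (fun ω => (V₁ ω, W ω))
      ≤ ent μ (fun ω => (Y₁ ω, V₁ ω, W ω)) + ent μ (fun ω => (Y₂ ω, V₁ ω, W ω)) :=
    ent_submod fY₁ fY₂ (fV₁.pair fW)
  have S6 : ent μ (fun ω => (X₁ ω, Y₁ ω, Y₂ ω, V₁ ω, W ω)) + ent μ (fun ω => (Y₂ ω, V₁ ω, W ω))
      ≤ ent μ (fun ω => (X₁ ω, Y₂ ω, V₁ ω, W ω)) + ent μ (fun ω => (Y₁ ω, Y₂ ω, V₁ ω, W ω)) :=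
    ent_submod fX₁ fY₁ (fY₂.pair (fV₁.pair fW))
  have S7 : ent μ (fun ω => (X₁ ω, Y₂ ω, V₂ ω)) + ent μ V₂
      ≤ ent μ (fun ω => (X₁ ω, V₂ ω)) + ent μ (fun ω => (Y₂ ω, V₂ ω)) :=
    ent_submod fX₁ fY₂ fV₂
  have S8 : ent μ (fun ω => (X₁ ω, V₁ ω, Y₂ ω, V₂ ω)) + ent μ (fun ω => (Y₂ ω, V₂ ω))
      ≤ ent μ (fun ω => (X₁ ω, Y₂ ω, V₂ ω)) + ent μ (fun ω => (V₁ ω, Y₂ ω, V₂ ω)) :=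
    ent_submod fX₁ fV₁ (fY₂.pair fV₂)
  -- independence equalities
  have E1 : ent μ (fun ω => (X₁ ω, Y₁ ω)) = ent μ X₁ + ent μ Y₁ := by
    apply ent_indep fX₁ fY₁
    intro a b
    unfold EntAux.pr
    have hs : (fun ω => (X₁ ω, Y₁ ω)) ⁻¹' {(a, b)} = X₁ ⁻¹' {a} ∩ Y₁ ⁻¹' {b} := by
      ext ω; simp [Prod.ext_iff]
    rw [hs, hind₁.measure_inter_preimage_eq_mul _ _ (measurableSet_singleton a)
      (measurableSet_singleton b), ENNReal.toReal_mul]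
  have E2 : ent μ (fun ω => (X₂ ω, Y₂ ω)) = ent μ X₂ + ent μ Y₂ := by
    apply ent_indep fX₂ fY₂
    intro a b
    unfold EntAux.pr
    have hs : (fun ω => (X₂ ω, Y₂ ω)) ⁻¹' {(a, b)} = X₂ ⁻¹' {a} ∩ Y₂ ⁻¹' {b} := by
      ext ω; simp [Prod.ext_iff]
    rw [hs, hind₂.measure_inter_preimage_eq_mul _ _ (measurableSet_singleton a)
      (measurableSet_singleton b), ENNReal.toReal_mul]
  have fquad : FM (fun ω => (X₁ ω, Y₁ ω, X₂ ω, Y₂ ω)) := fX₁.pair (fY₁.pair (fX₂.pair fY₂))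
  have fpair3 : FM (fun ω => (X₃ ω, Y₃ ω)) := fX₃.pair fY₃
  have E3 : ent μ (fun ω => ((X₁ ω, Y₁ ω, X₂ ω, Y₂ ω), (X₃ ω, Y₃ ω)))
      = ent μ (fun ω => (X₁ ω, Y₁ ω, X₂ ω, Y₂ ω)) + ent μ (fun ω => (X₃ ω, Y₃ ω)) := by
    apply ent_indep fquad fpair3
    intro a b
    unfold EntAux.pr
    have hs : (fun ω => ((X₁ ω, Y₁ ω, X₂ ω, Y₂ ω), (X₃ ω, Y₃ ω))) ⁻¹' {(a, b)}
        = (fun ω => (X₁ ω, Y₁ ω, X₂ ω, Y₂ ω)) ⁻¹' {a} ∩ (fun ω => (X₃ ω, Y₃ ω)) ⁻¹' {b} := by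
      ext ω; simp [Prod.ext_iff]
    rw [hs, hind.measure_inter_preimage_eq_mul _ _ (measurableSet_singleton a)
      (measurableSet_singleton b), ENNReal.toReal_mul]
  -- Markov equality
  have E4 : ent μ (fun ω => ((X₁ ω, Y₁ ω), U ω, (X₂ ω, Y₂ ω))) + ent μ U
      = ent μ (fun ω => ((X₁ ω, Y₁ ω), U ω)) + ent μ (fun ω => (U ω, (X₂ ω, Y₂ ω))) := by
    apply ent_markov (fX₁.pair fY₁) fU (fX₂.pair fY₂)
    intro a b c
    unfold EntAux.pr
    have h1 : (fun ω => ((X₁ ω, Y₁ ω), U ω, (X₂ ω, Y₂ ω))) ⁻¹' {(a, b, c)}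
        = (fun ω => (X₁ ω, Y₁ ω)) ⁻¹' {a} ∩ U ⁻¹' {b} ∩ (fun ω => (X₂ ω, Y₂ ω)) ⁻¹' {c} := by
      ext ω; simp [Prod.ext_iff, and_assoc]
    have h2 : (fun ω => ((X₁ ω, Y₁ ω), U ω)) ⁻¹' {(a, b)}
        = (fun ω => (X₁ ω, Y₁ ω)) ⁻¹' {a} ∩ U ⁻¹' {b} := by
      ext ω; simp [Prod.ext_iff]
    have h3 : (fun ω => (U ω, (X₂ ω, Y₂ ω))) ⁻¹' {(b, c)}
        = U ⁻¹' {b} ∩ (fun ω => (X₂ ω, Y₂ ω)) ⁻¹' {c} := by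
      ext ω; simp [Prod.ext_iff]
    rw [h1, h2, h3, ← ENNReal.toReal_mul, ← ENNReal.toReal_mul, hMC a c b]
  -- glue equalities
  have g1 : ent μ (fun ω => (X₃ ω, W ω)) = ent μ (fun ω => (X₃ ω, Y₃ ω)) :=
    ent_eq_of_inv (fX₃.pair fW) (fX₃.pair fY₃)
      (fun p => (p.1, p.2 - p.1)) (fun p => (p.1, p.1 + p.2))
      (Filter.Eventually.of_forall fun ω => by
        simp only [hW_def, Prod.mk.injEq]
        repeat' apply And.intro
        all_goals first | rfl | trivial | abel)
      (Filter.Eventually.of_forall fun ω => by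
        simp only [hW_def, Prod.mk.injEq]
        repeat' apply And.intro
        all_goals first | rfl | abel)
  have g2 : ent μ (fun ω => (X₃ ω, V₁ ω, W ω)) = ent μ (fun ω => (Y₁ ω, V₁ ω, W ω)) :=
    ent_eq_of_inv (fX₃.pair (fV₁.pair fW)) (fY₁.pair (fV₁.pair fW))
      (fun t => (t.1 - t.2.1, t.2)) (fun t => (t.1 + t.2.1, t.2))
      (Filter.Eventually.of_forall fun ω => by
        simp only [hV₁_def, Prod.mk.injEq]
        repeat' apply And.intro
        all_goals first | rfl | trivial | abel)
      (Filter.Eventually.of_forall fun ω => by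
        simp only [hV₁_def, Prod.mk.injEq]
        repeat' apply And.intro
        all_goals first | rfl | trivial | abel)
  have g3 : ent μ (fun ω => (X₁ ω, Y₂ ω, V₁ ω, W ω)) = ent μ (fun ω => (X₁ ω, V₁ ω, Y₂ ω, V₂ ω)) :=
    ent_eq_of_inv (fX₁.pair (fY₂.pair (fV₁.pair fW))) (fX₁.pair (fV₁.pair (fY₂.pair fV₂)))
      (fun t => (t.1, (t.2.2.1, (t.2.1, t.1 + t.2.1 + t.2.2.1 - t.2.2.2))))
      (fun t => (t.1, (t.2.2.1, (t.2.1, t.1 + t.2.2.1 + t.2.1 - t.2.2.2))))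
      (by
        filter_upwards [heq] with ω h
        have h2 : X₂ ω = X₁ ω - Y₁ ω + Y₂ ω := by rw [h]; abel
        simp only [hV₁_def, hV₂_def, hW_def, Prod.mk.injEq, h2]
        repeat' apply And.intro
        all_goals first | rfl | trivial | abel)
      (by
        filter_upwards [heq] with ω h
        have h2 : X₂ ω = X₁ ω - Y₁ ω + Y₂ ω := by rw [h]; abel
        simp only [hV₁_def, hV₂_def, hW_def, Prod.mk.injEq, h2]
        repeat' apply And.intro
        all_goals first | rfl | trivial | abel)
  have g4 : ent μ (fun ω => (X₁ ω, Y₁ ω, Y₂ ω, V₁ ω, W ω))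
      = ent μ (fun ω => ((X₁ ω, Y₁ ω, X₂ ω, Y₂ ω), (X₃ ω, Y₃ ω))) :=
    ent_eq_of_inv (fX₁.pair (fY₁.pair (fY₂.pair (fV₁.pair fW)))) (fquad.pair fpair3)
      (fun t => ((t.1, (t.2.1, (t.1 - t.2.1 + t.2.2.1, t.2.2.1))),
        (t.2.2.2.1 + t.2.1, t.2.2.2.2 - t.2.2.2.1 - t.2.1)))
      (fun t => (t.1.1, (t.1.2.1, (t.1.2.2.2, (t.2.1 - t.1.2.1, t.2.1 + t.2.2)))))
      (by
        filter_upwards [heq] with ω h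
        have h2 : X₂ ω = X₁ ω - Y₁ ω + Y₂ ω := by rw [h]; abel
        simp only [hV₁_def, hW_def, Prod.mk.injEq, h2]
        repeat' apply And.intro
        all_goals first | rfl | trivial | abel)
      (by
        filter_upwards [heq] with ω h
        simp only [hV₁_def, hW_def, Prod.mk.injEq]
        repeat' apply And.intro
        all_goals first | rfl | abel)
  have g5a : ent μ (fun ω => ((X₁ ω, Y₁ ω), U ω)) = ent μ (fun ω => (X₁ ω, Y₁ ω)) :=
    ent_eq_of_inv ((fX₁.pair fY₁).pair fU) (fX₁.pair fY₁)
      Prod.fst (fun p => (p, p.1 - p.2))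
      (Filter.Eventually.of_forall fun ω => rfl)
      (Filter.Eventually.of_forall fun ω => by
        simp only [hU_def, Prod.mk.injEq]
        repeat' apply And.intro
        all_goals first | rfl | abel)
  have g5b : ent μ (fun ω => (U ω, (X₂ ω, Y₂ ω))) = ent μ (fun ω => (X₂ ω, Y₂ ω)) :=
    ent_eq_of_inv (fU.pair (fX₂.pair fY₂)) (fX₂.pair fY₂)
      Prod.snd (fun p => (p.1 - p.2, p))
      (Filter.Eventually.of_forall fun ω => rfl)
      (by
        filter_upwards [heq] with ω h
        simp only [hU_def, Prod.mk.injEq]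
        repeat' apply And.intro
        all_goals first | rfl | trivial | exact h.symm | exact h | abel)
  have g5c : ent μ (fun ω => ((X₁ ω, Y₁ ω), U ω, (X₂ ω, Y₂ ω)))
      = ent μ (fun ω => (X₁ ω, Y₁ ω, X₂ ω, Y₂ ω)) :=
    ent_eq_of_inv ((fX₁.pair fY₁).pair (fU.pair (fX₂.pair fY₂))) fquad
      (fun d => (d.1.1, (d.1.2, d.2.2)))
      (fun t => ((t.1, t.2.1), (t.1 - t.2.1, t.2.2)))
      (Filter.Eventually.of_forall fun ω => rfl)
      (Filter.Eventually.of_forall fun ω => by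
        simp only [hU_def, Prod.mk.injEq]
        repeat' apply And.intro
        all_goals first | rfl | abel)
  linarith [S1, S2, S3, S4, S5, S6, S7, S8, S9, E1, E2, E3, E4, g1, g2, g3, g4, g5a, g5b, g5c]
end

section
/- Let G ⊆ A × B be a finite bipartite graph with no isolated vertices. Then min over input distributions P_X of max over channels W consistent with G of (H(Y) − H(X)) is at most log μ_{A→B}(G). -/
open Real

variable {A B : Type*} [Fintype A] [Fintype B] [DecidableEq A] [DecidableEq B]

/-- The neighborhood of `S ⊆ A` in the bipartite graph `E ⊆ A × B`. -/
def nbhd (E : Finset (A × B)) (S : Finset A) : Finset B :=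
  (E.filter (fun p => p.1 ∈ S)).image Prod.snd

/-- The magnification ratio `μ_{A→B}(E) = min_{∅ ≠ S ⊆ A} |N(S)|/|S|`. -/
noncomputable def magRatio (E : Finset (A × B)) : ℝ :=
  sInf {r : ℝ | ∃ S : Finset A, S.Nonempty ∧ r = (nbhd E S).card / S.card}

/-- `p` is a probability distribution on `A`. -/
def IsDist (p : A → ℝ) : Prop := (∀ a, 0 ≤ p a) ∧ ∑ a, p a = 1

/-- `W` is a channel from `A` to `B` consistent with the bipartite graph `E`. -/
def IsChannel (E : Finset (A × B)) (W : A → B → ℝ) : Prop :=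
  (∀ a b, 0 ≤ W a b) ∧ (∀ a, ∑ b, W a b = 1) ∧ ∀ a b, (a, b) ∉ E → W a b = 0

/-- Output distribution of channel `W` with input distribution `p`. -/
def outDist (p : A → ℝ) (W : A → B → ℝ) (b : B) : ℝ := ∑ a, p a * W a b

/-- Shannon entropy (natural log) of a distribution on a finite type. -/
noncomputable def entDist {S : Type*} [Fintype S] (q : S → ℝ) : ℝ :=
  ∑ s : S, Real.negMulLog (q s)

lemma negMulLog_le_aux {x n : ℝ} (hx : 0 ≤ x) (hn : 0 < n) :
    Real.negMulLog x ≤ 1 / n - x + x * Real.log n := by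
  rcases hx.eq_or_lt with h | h
  · simp [← h]
    positivity
  · have h1 : Real.log (1 / (n * x)) ≤ 1 / (n * x) - 1 :=
      Real.log_le_sub_one_of_pos (by positivity)
    have h2 : Real.log (1 / (n * x)) = -Real.log n - Real.log x := by
      rw [one_div, Real.log_inv, Real.log_mul hn.ne' h.ne']; ring
    have h3 : -Real.log x ≤ 1 / (n * x) - 1 + Real.log n := by linarith
    have h4 : x * (-Real.log x) ≤ x * (1 / (n * x) - 1 + Real.log n) :=
      mul_le_mul_of_nonneg_left h3 hx
    have h5 : x * (1 / (n * x)) = 1 / n := by field_simp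
    rw [Real.negMulLog]
    nlinarith [h4, h5, mul_comm x n]

/-- Max-entropy bound: a distribution supported on `T` has entropy at most `log |T|`. -/
lemma ent_le {S : Type*} [Fintype S] (q : S → ℝ) (T : Finset S) (hT : T.Nonempty)
    (h0 : ∀ s, 0 ≤ q s) (hsupp : ∀ s ∉ T, q s = 0) (hsum : ∑ s ∈ T, q s = 1) :
    entDist q ≤ Real.log T.card := by
  have hn : (0 : ℝ) < T.card := by exact_mod_cast Finset.card_pos.mpr hT
  have h1 : entDist q = ∑ s ∈ T, Real.negMulLog (q s) := by
    rw [entDist, ← Finset.sum_subset T.subset_univ]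
    intro x _ hx
    rw [hsupp x hx, Real.negMulLog_zero]
  rw [h1]
  calc ∑ s ∈ T, Real.negMulLog (q s)
      ≤ ∑ s ∈ T, (1 / (T.card : ℝ) - q s + q s * Real.log T.card) :=
        Finset.sum_le_sum fun s _ => negMulLog_le_aux (h0 s) hn
    _ = (T.card : ℝ) * (1 / T.card) - (∑ s ∈ T, q s) + (∑ s ∈ T, q s) * Real.log T.card := by
        rw [Finset.sum_add_distrib, Finset.sum_sub_distrib, Finset.sum_const, ← Finset.sum_mul]
        simp [mul_comm]
    _ = Real.log T.card := by
        rw [hsum]; field_simp; ring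

lemma ent_nonneg {S : Type*} [Fintype S] (q : S → ℝ) (h0 : ∀ s, 0 ≤ q s)
    (hsum : ∑ s, q s = 1) : 0 ≤ entDist q := by
  refine Finset.sum_nonneg fun s _ => Real.negMulLog_nonneg (h0 s) ?_
  calc q s ≤ ∑ t, q t := Finset.single_le_sum (fun t _ => h0 t) (Finset.mem_univ s)
    _ = 1 := hsum

lemma ent_uniform (S₀ : Finset A) (h : S₀.Nonempty) :
    entDist (fun a => if a ∈ S₀ then (1 : ℝ) / S₀.card else 0) = Real.log S₀.card := by
  have hk : (0 : ℝ) < S₀.card := by exact_mod_cast Finset.card_pos.mpr h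
  have h1 : entDist (fun a => if a ∈ S₀ then (1 : ℝ) / S₀.card else 0)
      = ∑ a, (if a ∈ S₀ then Real.negMulLog ((1 : ℝ) / S₀.card) else 0) := by
    refine Finset.sum_congr rfl fun a _ => ?_
    split_ifs with hm <;> simp [hm]
  rw [h1, Finset.sum_ite_mem, Finset.univ_inter, Finset.sum_const, nsmul_eq_mul,
    Real.negMulLog, one_div, Real.log_inv]
  field_simp

lemma mem_nbhd {E : Finset (A × B)} {S : Finset A} {b : B} :
    b ∈ nbhd E S ↔ ∃ a ∈ S, (a, b) ∈ E := by
  simp only [nbhd, Finset.mem_image, Finset.mem_filter]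
  constructor
  · rintro ⟨⟨a, b'⟩, ⟨hE, hS⟩, rfl⟩; exact ⟨a, hS, hE⟩
  · rintro ⟨a, hS, hE⟩; exact ⟨(a, b), ⟨hE, hS⟩, rfl⟩

lemma outDist_sum {E : Finset (A × B)} {p : A → ℝ} {W : A → B → ℝ}
    (hp : IsDist p) (hW : IsChannel E W) : ∑ b, outDist p W b = 1 := by
  unfold outDist
  rw [Finset.sum_comm]
  calc ∑ a, ∑ b, p a * W a b = ∑ a, p a * ∑ b, W a b := by
        simp [Finset.mul_sum]
    _ = ∑ a, p a := by simp [hW.2.1]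
    _ = 1 := hp.2

lemma outDist_nonneg {E : Finset (A × B)} {p : A → ℝ} {W : A → B → ℝ}
    (hp : IsDist p) (hW : IsChannel E W) (b : B) : 0 ≤ outDist p W b :=
  Finset.sum_nonneg fun a _ => mul_nonneg (hp.1 a) (hW.1 a b)


/-- The easy direction: `min_{P_X} max_{W ∈ W(E)} (H(Y) - H(X)) ≤ log μ_{A→B}(E)`. -/
theorem stmt16 (E : Finset (A × B))
    (hA : ∀ a : A, ∃ b : B, (a, b) ∈ E) (hB : ∀ b : B, ∃ a : A, (a, b) ∈ E) :
    sInf {r : ℝ | ∃ p : A → ℝ, IsDist p ∧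
        r = sSup {s : ℝ | ∃ W : A → B → ℝ, IsChannel E W ∧
              s = entDist (outDist p W) - entDist p}}
      ≤ Real.log (magRatio E) := by
  classical
  rcases isEmpty_or_nonempty A with hempty | hne
  · have h1 : {r : ℝ | ∃ p : A → ℝ, IsDist p ∧
        r = sSup {s : ℝ | ∃ W : A → B → ℝ, IsChannel E W ∧
              s = entDist (outDist p W) - entDist p}} = ∅ := by
      ext r
      simp only [Set.mem_setOf_eq, Set.mem_empty_iff_false, iff_false, not_exists]
      rintro p ⟨⟨_, hsum⟩, _⟩
      rw [Finset.univ_eq_empty, Finset.sum_empty] at hsum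
      norm_num at hsum
    have h2 : {r : ℝ | ∃ S : Finset A, S.Nonempty ∧ r = ((nbhd E S).card : ℝ) / S.card} = ∅ := by
      ext r
      simp only [Set.mem_setOf_eq, Set.mem_empty_iff_false, iff_false, not_exists]
      rintro S ⟨⟨a, _⟩, _⟩
      exact (IsEmpty.false a).elim
    rw [h1, Real.sInf_empty, magRatio, h2, Real.sInf_empty, Real.log_zero]
  · obtain ⟨a₀⟩ := hne
    obtain ⟨b₀, hb₀⟩ := hA a₀
    have hAne : Nonempty A := ⟨a₀⟩
    have hBne : Nonempty B := ⟨b₀⟩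
    -- the ratio set is finite and nonempty, so the infimum is attained
    set RS := {r : ℝ | ∃ S : Finset A, S.Nonempty ∧ r = ((nbhd E S).card : ℝ) / S.card} with hRS
    have hfin : RS.Finite :=
      Set.Finite.subset (Set.finite_range (fun S : Finset A => ((nbhd E S).card : ℝ) / S.card))
        (by rintro r ⟨S, _, rfl⟩; exact ⟨S, rfl⟩)
    have hrne : RS.Nonempty := ⟨_, {a₀}, Finset.singleton_nonempty a₀, rfl⟩
    obtain ⟨S₀, hS₀, hμ⟩ : ∃ S : Finset A, S.Nonempty ∧
        magRatio E = ((nbhd E S).card : ℝ) / S.card := hrne.csInf_mem hfin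
    have hk : (0 : ℝ) < S₀.card := by exact_mod_cast Finset.card_pos.mpr hS₀
    -- the neighborhood of S₀ is nonempty
    obtain ⟨a₁, ha₁⟩ := hS₀
    obtain ⟨b₁, hb₁⟩ := hA a₁
    have hNne : (nbhd E S₀).Nonempty := ⟨b₁, mem_nbhd.mpr ⟨a₁, ha₁, hb₁⟩⟩
    have hm : (0 : ℝ) < (nbhd E S₀).card := by exact_mod_cast Finset.card_pos.mpr hNne
    -- uniform distribution on S₀
    set p : A → ℝ := fun a => if a ∈ S₀ then (1 : ℝ) / S₀.card else 0 with hp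
    have hpd : IsDist p := by
      constructor
      · intro a; dsimp [p]; split_ifs <;> positivity
      · dsimp [p]
        rw [Finset.sum_ite_mem, Finset.univ_inter, Finset.sum_const, nsmul_eq_mul]
        field_simp
    have hentp : entDist p = Real.log S₀.card := ent_uniform S₀ ⟨a₁, ha₁⟩
    -- a default channel exists
    have hchan : ∀ q : A → ℝ, IsDist q → ∃ s, ∃ W : A → B → ℝ, IsChannel E W ∧
        s = entDist (outDist q W) - entDist q := by
      intro q hq
      refine ⟨_, fun a b => if b = (hA a).choose then 1 else 0, ⟨?_, ?_, ?_⟩, rfl⟩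
      · intro a b; dsimp only; split_ifs <;> norm_num
      · intro a; simp
      · intro a b hnot; dsimp only; split_ifs with h
        · subst h; exact absurd (hA a).choose_spec hnot
        · rfl
    -- entropy bounds for any dist/channel
    have hout_le : ∀ (q : A → ℝ) (W : A → B → ℝ), IsDist q → IsChannel E W →
        entDist (outDist q W) ≤ Real.log (Fintype.card B) := by
      intro q W hq hW
      have := ent_le (outDist q W) Finset.univ Finset.univ_nonempty
        (outDist_nonneg hq hW) (fun s hs => absurd (Finset.mem_univ s) hs)
        (outDist_sum hq hW)
      simpa using this
    have hout_nonneg : ∀ (q : A → ℝ) (W : A → B → ℝ), IsDist q → IsChannel E W →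
        0 ≤ entDist (outDist q W) := fun q W hq hW =>
      ent_nonneg _ (outDist_nonneg hq hW) (outDist_sum hq hW)
    have hent_nonneg : ∀ q : A → ℝ, IsDist q → 0 ≤ entDist q := fun q hq =>
      ent_nonneg _ hq.1 hq.2
    have hent_le : ∀ q : A → ℝ, IsDist q → entDist q ≤ Real.log (Fintype.card A) := by
      intro q hq
      have := ent_le q Finset.univ Finset.univ_nonempty hq.1
        (fun s hs => absurd (Finset.mem_univ s) hs) hq.2
      simpa using this
    -- lower bound on the outer set
    have hbdd : BddBelow {r : ℝ | ∃ q : A → ℝ, IsDist q ∧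
        r = sSup {s : ℝ | ∃ W : A → B → ℝ, IsChannel E W ∧
              s = entDist (outDist q W) - entDist q}} := by
      refine ⟨-Real.log (Fintype.card A), ?_⟩
      rintro r ⟨q, hq, rfl⟩
      obtain ⟨s0, W0, hW0, hs0⟩ := hchan q hq
      have hub : BddAbove {s : ℝ | ∃ W : A → B → ℝ, IsChannel E W ∧
          s = entDist (outDist q W) - entDist q} := by
        refine ⟨Real.log (Fintype.card B), ?_⟩
        rintro s ⟨W, hW, rfl⟩
        have h1 := hout_le q W hq hW
        have h2 := hent_nonneg q hq
        linarith
      have h3 : -Real.log (Fintype.card A) ≤ s0 := by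
        have h4 := hout_nonneg q W0 hq hW0
        have h5 := hent_le q hq
        rw [hs0]; linarith
      exact h3.trans (le_csSup hub ⟨W0, hW0, hs0⟩)
    -- the key bound for the uniform distribution
    have hkey : sSup {s : ℝ | ∃ W : A → B → ℝ, IsChannel E W ∧
          s = entDist (outDist p W) - entDist p}
        ≤ Real.log ((nbhd E S₀).card : ℝ) - Real.log (S₀.card : ℝ) := by
      obtain ⟨s0, W0, hW0, hs0⟩ := hchan p hpd
      refine csSup_le ⟨s0, W0, hW0, hs0⟩ ?_
      rintro s ⟨W, hW, rfl⟩
      have hsupp : ∀ b ∉ nbhd E S₀, outDist p W b = 0 := by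
        intro b hb
        refine Finset.sum_eq_zero fun a _ => ?_
        by_cases ha : a ∈ S₀
        · have : W a b = 0 := by
            refine hW.2.2 a b fun hE => hb (mem_nbhd.mpr ⟨a, ha, hE⟩)
          rw [this, mul_zero]
        · have : p a = 0 := by simp [p, ha]
          rw [this, zero_mul]
      have hsum : ∑ b ∈ nbhd E S₀, outDist p W b = 1 := by
        rw [Finset.sum_subset (Finset.subset_univ _) (fun b _ hb => hsupp b hb)]
        exact outDist_sum hpd hW
      have h1 : entDist (outDist p W) ≤ Real.log ((nbhd E S₀).card : ℝ) :=
        ent_le _ _ hNne (outDist_nonneg hpd hW) hsupp hsum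
      rw [hentp]
      linarith
    -- conclude
    have hμ' : Real.log (magRatio E) =
        Real.log ((nbhd E S₀).card : ℝ) - Real.log (S₀.card : ℝ) := by
      rw [hμ, Real.log_div hm.ne' hk.ne']
    rw [hμ']
    exact (csInf_le hbdd ⟨p, hpd, rfl⟩).trans hkey
end
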